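/- Let X be a δ-hyperbolic space, let f, g be isometries of X, and suppose f has attracting/repelling fixed points A₊, A₋ on the Gromov boundary ∂X with g·A₊ ≠ A₋ and f has nonzero stable translation length. Then there exists M ≥ 0 such that for all m ≥ M, the isometry f^m g has nonzero stable translation length. -/

import Mathlib

open Filter

/-- `f` restricted to `[a,b]` is a geodesic (parametrized by arclength). -/
def IsGeodesicOn {X : Type*} [MetricSpace X] (f : ℝ → X) (a b : ℝ) : Prop :=
  ∀ s ∈ Set.Icc a b, ∀ t ∈ Set.Icc a b, dist (f s) (f t) = |s - t|

/-- `X` is a geodesic metric space: any two points are joined by a geodesic. -/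
def GeodSpace (X : Type*) [MetricSpace X] : Prop :=
  ∀ x y : X, ∃ f : ℝ → X, IsGeodesicOn f 0 (dist x y) ∧ f 0 = x ∧ f (dist x y) = y

/-- `X` is `δ`-hyperbolic: each side of any geodesic triangle lies in the
`δ`-neighborhood of the union of the other two sides. -/
def DeltaHyp (X : Type*) [MetricSpace X] (δ : ℝ) : Prop :=
  ∀ (T₁ T₂ T₃ : ℝ) (f g h : ℝ → X),
    IsGeodesicOn f 0 T₁ → IsGeodesicOn g 0 T₂ → IsGeodesicOn h 0 T₃ →
    f 0 = h 0 → f T₁ = g 0 → g T₂ = h T₃ →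
    ∀ t ∈ Set.Icc (0 : ℝ) T₃, ∃ s : ℝ,
      (s ∈ Set.Icc (0 : ℝ) T₁ ∧ dist (h t) (f s) ≤ δ) ∨
      (s ∈ Set.Icc (0 : ℝ) T₂ ∧ dist (h t) (g s) ≤ δ)

noncomputable section

namespace S12

variable {X : Type*} [MetricSpace X]

/-- The Gromov product of `a` and `b` based at `w`. -/
def gp (w a b : X) : ℝ := (dist w a + dist w b - dist a b) / 2

lemma gp_nonneg (w a b : X) : 0 ≤ gp w a b := by
  have h := dist_triangle a w b
  rw [dist_comm a w] at h
  simp only [gp]; linarith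

lemma gp_symm (w a b : X) : gp w a b = gp w b a := by
  simp only [gp]; rw [dist_comm a b]; ring

lemma gp_le (w a b : X) : gp w a b ≤ dist w a := by
  have h := dist_triangle w a b
  simp only [gp]; linarith

lemma gp_add (a b c : X) : gp a c b + gp b c a = dist a b := by
  simp only [gp]
  rw [dist_comm b c, dist_comm b a, dist_comm c a]
  ring

lemma gp_lip_base (w w' a b : X) : gp w a b ≤ gp w' a b + dist w w' := by
  have h1 := dist_triangle w w' a
  have h2 := dist_triangle w w' b
  simp only [gp]; linarith

lemma gp_lip_arg (w a b b' : X) : gp w a b ≤ gp w a b' + dist b b' := by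
  have h1 := dist_triangle w b' b
  rw [dist_comm b' b] at h1
  have h2 := dist_triangle a b b'
  simp only [gp]; linarith

lemma gp_isom {φ : X → X} (hφ : Isometry φ) (w a b : X) :
    gp (φ w) (φ a) (φ b) = gp w a b := by
  simp [gp, hφ.dist_eq]

lemma isom_iter {φ : X → X} (hφ : Isometry φ) (n : ℕ) : Isometry (φ^[n]) := by
  induction n with
  | zero => simpa using isometry_id
  | succ n ih => rw [Function.iterate_succ']; exact hφ.comp ih
lemma geod_left {σ : ℝ → X} {T : ℝ} (hσ : IsGeodesicOn σ 0 T) {s : ℝ}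
    (hs : s ∈ Set.Icc (0:ℝ) T) : dist (σ 0) (σ s) = s := by
  have h := hσ 0 ⟨le_refl 0, (hs.1.trans hs.2)⟩ s hs
  rw [h, abs_of_nonpos (by linarith [hs.1])]
  ring

lemma geod_right {σ : ℝ → X} {T : ℝ} (hσ : IsGeodesicOn σ 0 T) {s : ℝ}
    (hs : s ∈ Set.Icc (0:ℝ) T) : dist (σ s) (σ T) = T - s := by
  have h := hσ s hs T ⟨hs.1.trans hs.2, le_refl T⟩
  rw [h, abs_of_nonpos (by linarith [hs.2])]
  ring

lemma four_point {δ : ℝ} (hδ : 0 ≤ δ) (hgeo : GeodSpace X) (hhyp : DeltaHyp X δ)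
    (w x y z : X) :
    min (gp w x y) (gp w y z) ≤ gp w x z + 3 * δ := by
  obtain ⟨σ₁, hσ₁, hσ₁0, hσ₁T⟩ := hgeo x y
  obtain ⟨σ₂, hσ₂, hσ₂0, hσ₂T⟩ := hgeo y z
  obtain ⟨σ₃, hσ₃, hσ₃0, hσ₃T⟩ := hgeo x z
  obtain ⟨τ₁, hτ₁, hτ₁0, hτ₁T⟩ := hgeo x w
  obtain ⟨τ₂, hτ₂, hτ₂0, hτ₂T⟩ := hgeo w z
  set t : ℝ := gp x w z with hts
  have htmem : t ∈ Set.Icc (0:ℝ) (dist x z) := by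
    constructor
    · exact gp_nonneg x w z
    · rw [hts, gp_symm]; exact gp_le x z w
  -- dist x (σ₃ t) = t, dist (σ₃ t) z = dist x z - t
  have hxσ : dist x (σ₃ t) = t := by rw [← hσ₃0]; exact geod_left hσ₃ htmem
  have hσz : dist (σ₃ t) z = dist x z - t := by
    have h := geod_right hσ₃ htmem; rwa [hσ₃T] at h
  -- Step A : dist w (σ₃ t) ≤ gp w x z + 2δ
  have hwp : dist w (σ₃ t) ≤ gp w x z + 2 * δ := by
    obtain ⟨s, hs⟩ := hhyp (dist x w) (dist w z) (dist x z) τ₁ τ₂ σ₃ hτ₁ hτ₂ hσ₃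
      (by rw [hτ₁0, hσ₃0]) (by rw [hτ₁T, hτ₂0]) (by rw [hτ₂T, hσ₃T]) t htmem
    have hid : gp x w z + gp w x z = dist x w := by
      have := gp_add x w z
      rw [gp_symm x z w, gp_symm w z x] at this
      exact this
    rcases hs with ⟨hsmem, hd⟩ | ⟨hsmem, hd⟩
    · -- close to τ₁ s on [x,w]
      have h1 : dist x (τ₁ s) = s := by rw [← hτ₁0]; exact geod_left hτ₁ hsmem
      have h2 : dist (τ₁ s) w = dist x w - s := by
        have h := geod_right hτ₁ hsmem; rwa [hτ₁T] at h
      have h3 : dist x (σ₃ t) ≤ dist x (τ₁ s) + dist (τ₁ s) (σ₃ t) := dist_triangle _ _ _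
      have h4 : dist w (σ₃ t) ≤ dist w (τ₁ s) + dist (τ₁ s) (σ₃ t) := dist_triangle _ _ _
      rw [dist_comm (τ₁ s) (σ₃ t)] at h3 h4
      rw [dist_comm w (τ₁ s)] at h4
      rw [h1] at h3; rw [h2] at h4
      rw [hxσ] at h3
      linarith
    · -- close to τ₂ s on [w,z]
      have h1 : dist w (τ₂ s) = s := by rw [← hτ₂0]; exact geod_left hτ₂ hsmem
      have h2 : dist (τ₂ s) z = dist w z - s := by
        have h := geod_right hτ₂ hsmem; rwa [hτ₂T] at h
      have h3 : dist (σ₃ t) z ≤ dist (σ₃ t) (τ₂ s) + dist (τ₂ s) z := dist_triangle _ _ _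
      have h4 : dist w (σ₃ t) ≤ dist w (τ₂ s) + dist (τ₂ s) (σ₃ t) := dist_triangle _ _ _
      rw [dist_comm (τ₂ s) (σ₃ t)] at h4
      rw [h1] at h4; rw [h2] at h3; rw [hσz] at h3
      simp only [gp] at hid ⊢
      have htv : t = (dist x w + dist x z - dist w z) / 2 := by rw [hts]; rfl
      have hcomm : dist w x = dist x w := dist_comm w x
      linarith
  -- Step B : σ₃ t close to a point of [x,y] or [y,z]
  obtain ⟨s, hs⟩ := hhyp (dist x y) (dist y z) (dist x z) σ₁ σ₂ σ₃ hσ₁ hσ₂ hσ₃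
    (by rw [hσ₁0, hσ₃0]) (by rw [hσ₁T, hσ₂0]) (by rw [hσ₂T, hσ₃T]) t htmem
  rcases hs with ⟨hsmem, hd⟩ | ⟨hsmem, hd⟩
  · have h1 : dist x (σ₁ s) = s := by rw [← hσ₁0]; exact geod_left hσ₁ hsmem
    have h2 : dist (σ₁ s) y = dist x y - s := by
      have h := geod_right hσ₁ hsmem; rwa [hσ₁T] at h
    have h3 : gp w x y ≤ dist w (σ₁ s) := by
      have t1 := dist_triangle w (σ₁ s) x
      have t2 := dist_triangle w (σ₁ s) y
      rw [dist_comm (σ₁ s) x] at t1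
      simp only [gp]
      linarith
    have h4 : dist w (σ₁ s) ≤ dist w (σ₃ t) + dist (σ₃ t) (σ₁ s) := dist_triangle _ _ _
    calc min (gp w x y) (gp w y z) ≤ gp w x y := min_le_left _ _
      _ ≤ gp w x z + 3 * δ := by linarith
  · have h1 : dist y (σ₂ s) = s := by rw [← hσ₂0]; exact geod_left hσ₂ hsmem
    have h2 : dist (σ₂ s) z = dist y z - s := by
      have h := geod_right hσ₂ hsmem; rwa [hσ₂T] at h
    have h3 : gp w y z ≤ dist w (σ₂ s) := by
      have t1 := dist_triangle w (σ₂ s) y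
      have t2 := dist_triangle w (σ₂ s) z
      rw [dist_comm (σ₂ s) y] at t1
      simp only [gp]
      linarith
    have h4 : dist w (σ₂ s) ≤ dist w (σ₃ t) + dist (σ₃ t) (σ₂ s) := dist_triangle _ _ _
    calc min (gp w x y) (gp w y z) ≤ gp w y z := min_le_right _ _
      _ ≤ gp w x z + 3 * δ := by linarith
lemma chain {δ' : ℝ} (hδ' : 0 ≤ δ')
    (h4 : ∀ w x y z : X, min (gp w x y) (gp w y z) ≤ gp w x z + δ')
    (φ : X → X) (hφ : Isometry φ) (x₀ : X)
    (hL : 2 * gp (φ x₀) x₀ (φ (φ x₀)) + 4 * δ' + 1 ≤ dist x₀ (φ x₀)) :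
    (∀ n : ℕ, 1 ≤ n →
      (n : ℝ) * (dist x₀ (φ x₀) - 2 * gp (φ x₀) x₀ (φ (φ x₀)) - 2 * δ')
        ≤ dist x₀ (φ^[n] x₀)) ∧
    (∀ i j : ℕ, 1 ≤ i → i ≤ j →
      dist x₀ (φ^[i] x₀) - gp (φ x₀) x₀ (φ (φ x₀)) - 2 * δ'
        ≤ gp x₀ (φ^[i] x₀) (φ^[j] x₀)) := by
  set L : ℝ := dist x₀ (φ x₀) with hLs
  set P : ℝ := gp (φ x₀) x₀ (φ (φ x₀)) with hPs
  have hP0 : 0 ≤ P := gp_nonneg _ _ _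
  -- shift invariance
  have hshift : ∀ i s : ℕ, dist (φ^[i] x₀) (φ^[i+s] x₀) = dist x₀ (φ^[s] x₀) := by
    intro i s
    rw [Function.iterate_add_apply]
    exact (isom_iter hφ i).dist_eq _ _
  have hgshift : ∀ i a b c : ℕ,
      gp (φ^[i+a] x₀) (φ^[i+b] x₀) (φ^[i+c] x₀) = gp (φ^[a] x₀) (φ^[b] x₀) (φ^[c] x₀) := by
    intro i a b c
    rw [Function.iterate_add_apply, Function.iterate_add_apply, Function.iterate_add_apply]
    exact gp_isom (isom_iter hφ i) _ _ _
  have hLd : ∀ i : ℕ, dist (φ^[i] x₀) (φ^[i+1] x₀) = L := by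
    intro i; rw [hshift i 1]; simp [hLs]
  have hPd : ∀ i : ℕ, gp (φ^[i+1] x₀) (φ^[i] x₀) (φ^[i+2] x₀) = P := by
    intro i
    have := hgshift i 1 0 2
    simpa [hPs, Function.iterate_succ_apply'] using this
  -- the elementary identity `gp a c b + gp b c a = dist a b` specialised
  have hid : ∀ i j : ℕ, gp (φ^[i] x₀) (φ^[j] x₀) (φ^[i+1] x₀)
      + gp (φ^[i+1] x₀) (φ^[j] x₀) (φ^[i] x₀) = L := by
    intro i j
    rw [gp_add (φ^[i] x₀) (φ^[i+1] x₀) (φ^[j] x₀)]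
    exact hLd i
  -- 1D claim
  have claim1 : ∀ i : ℕ, 1 ≤ i → gp (φ^[i] x₀) x₀ (φ^[i+1] x₀) ≤ P + δ' := by
    intro i hi
    induction i, hi using Nat.le_induction with
    | base =>
      have := hPd 0
      simp only [Nat.zero_add, Function.iterate_zero, id_eq] at this
      rw [this]; linarith
    | succ i hi ih =>
      by_contra hc
      push_neg at hc
      have hA : gp (φ^[i+1] x₀) x₀ (φ^[i] x₀) = L - gp (φ^[i] x₀) x₀ (φ^[i+1] x₀) := by
        have h := gp_add (φ^[i] x₀) (φ^[i+1] x₀) x₀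
        rw [hLd i] at h; linarith
      have hA' : P + δ' < gp (φ^[i+1] x₀) (φ^[i] x₀) x₀ := by
        rw [gp_symm, hA]; linarith
      have h := h4 (φ^[i+1] x₀) (φ^[i] x₀) x₀ (φ^[i+2] x₀)
      rw [hPd i] at h
      rcases le_or_gt (gp (φ^[i+1] x₀) (φ^[i] x₀) x₀) (gp (φ^[i+1] x₀) x₀ (φ^[i+2] x₀)) with hm | hm
      · rw [min_eq_left hm] at h; linarith
      · rw [min_eq_right hm.le] at h; linarith
  -- distance growth
  have claim2 : ∀ n : ℕ, 1 ≤ n → (n : ℝ) * (L - 2 * P - 2 * δ') ≤ dist x₀ (φ^[n] x₀) := by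
    intro n hn
    induction n, hn using Nat.le_induction with
    | base => simpa using by linarith [hP0, hδ', hLs]
    | succ n hn ih =>
      have hG := claim1 n hn
      have h1 : gp (φ^[n] x₀) x₀ (φ^[n+1] x₀)
          = (dist (φ^[n] x₀) x₀ + L - dist x₀ (φ^[n+1] x₀)) / 2 := by
        rw [← hLd n]; simp [gp]
      rw [dist_comm (φ^[n] x₀) x₀] at h1
      rw [h1] at hG
      push_cast
      linarith
  -- 2D claim, by strong induction on j
  have claim3 : ∀ j i : ℕ, 1 ≤ i → i < j → gp (φ^[i] x₀) x₀ (φ^[j] x₀) ≤ P + 2 * δ' := by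
    intro j
    induction j using Nat.strong_induction_on with
    | _ j IH =>
      intro i hi hij
      rcases eq_or_lt_of_le (Nat.succ_le_of_lt hij) with he | hlt
      · -- j = i+1
        have := claim1 i hi
        rw [← he]; linarith
      · -- i+1 < j
        by_contra hc
        push_neg at hc
        -- gp (φ^[i+1]) (φ^[i]) (φ^[j]) = gp (φ^[1]) x₀ (φ^[j-i])
        have hsub : i + (j - i) = j := Nat.add_sub_cancel' hij.le
        have hs1 : gp (φ^[i+1] x₀) (φ^[i] x₀) (φ^[j] x₀)
            = gp (φ^[1] x₀) x₀ (φ^[j-i] x₀) := by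
          have := hgshift i 1 0 (j - i)
          rw [hsub] at this
          simpa using this
        have hji : gp (φ^[1] x₀) x₀ (φ^[j-i] x₀) ≤ P + 2 * δ' := by
          have h1j : 1 < j - i := by omega
          have hjj : j - i < j := by omega
          have := IH (j - i) hjj 1 le_rfl h1j
          simpa using this
        have hBig : P + 2 * δ' < gp (φ^[i] x₀) (φ^[j] x₀) (φ^[i+1] x₀) := by
          have h := hid i j
          have : gp (φ^[i+1] x₀) (φ^[j] x₀) (φ^[i] x₀) ≤ P + 2 * δ' := by
            rw [gp_symm, hs1]; exact hji
          linarith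
        have h := h4 (φ^[i] x₀) x₀ (φ^[j] x₀) (φ^[i+1] x₀)
        have hsmall := claim1 i hi
        rcases le_or_gt (gp (φ^[i] x₀) x₀ (φ^[j] x₀)) (gp (φ^[i] x₀) (φ^[j] x₀) (φ^[i+1] x₀)) with hm | hm
        · rw [min_eq_left hm] at h; linarith
        · rw [min_eq_right hm.le] at h; linarith
  refine ⟨claim2, ?_⟩
  intro i j hi hij
  rcases eq_or_lt_of_le hij with he | hlt
  · rw [← he]
    have : gp x₀ (φ^[i] x₀) (φ^[i] x₀) = dist x₀ (φ^[i] x₀) := by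
      simp [gp]
    rw [this]; linarith [hP0, hδ']
  · have h := claim3 j i hi hlt
    have hidq : gp x₀ (φ^[j] x₀) (φ^[i] x₀) + gp (φ^[i] x₀) (φ^[j] x₀) x₀ = dist x₀ (φ^[i] x₀) :=
      gp_add x₀ (φ^[i] x₀) (φ^[j] x₀)
    have h2 : gp (φ^[i] x₀) (φ^[j] x₀) x₀ ≤ P + 2 * δ' := by
      rw [gp_symm]; exact h
    have h3 : gp x₀ (φ^[i] x₀) (φ^[j] x₀) = gp x₀ (φ^[j] x₀) (φ^[i] x₀) := gp_symm _ _ _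
    rw [h3]
    linarith
lemma dist_iter_add {φ : X → X} (hφ : Isometry φ) (x : X) (p q : ℕ) :
    dist x (φ^[p+q] x) ≤ dist x (φ^[p] x) + dist x (φ^[q] x) := by
  have h := dist_triangle x (φ^[p] x) (φ^[p+q] x)
  rw [Function.iterate_add_apply] at h ⊢
  calc dist x (φ^[p] (φ^[q] x)) ≤ dist x (φ^[p] x) + dist (φ^[p] x) (φ^[p] (φ^[q] x)) :=
        dist_triangle _ _ _
    _ = dist x (φ^[p] x) + dist x (φ^[q] x) := by rw [(isom_iter hφ p).dist_eq]

lemma dist_iter_le {φ : X → X} (hφ : Isometry φ) (x : X) (n : ℕ) :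
    dist x (φ^[n] x) ≤ n * dist x (φ x) := by
  induction n with
  | zero => simp
  | succ n ih =>
    have h := dist_iter_add hφ x n 1
    simp only [Function.iterate_one] at h
    push_cast
    linarith

lemma fekete {φ : X → X} (hφ : Isometry φ) (x : X) {t : ℝ}
    (hst : Tendsto (fun n : ℕ => dist x (φ^[n] x) / n) atTop (nhds t))
    (m : ℕ) (hm : 1 ≤ m) : (m : ℝ) * t ≤ dist x (φ^[m] x) := by
  have hmul : ∀ k : ℕ, dist x (φ^[k*m] x) ≤ k * dist x (φ^[m] x) := by
    intro k
    induction k with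
    | zero => simp
    | succ k ih =>
      have h := dist_iter_add hφ x (k*m) m
      have : (k+1)*m = k*m + m := by ring
      rw [this]
      push_cast
      linarith
  have htd : Tendsto (fun k : ℕ => k * m) atTop atTop := by
    apply Filter.tendsto_atTop_atTop.2
    intro b
    exact ⟨b, fun a ha => le_trans ha (Nat.le_mul_of_pos_right a (by omega))⟩
  have hcomp : Tendsto (fun k : ℕ => dist x (φ^[k*m] x) / (k*m : ℕ)) atTop (nhds t) :=
    hst.comp htd
  have hle : ∀ᶠ k : ℕ in atTop, dist x (φ^[k*m] x) / ((k*m : ℕ) : ℝ) ≤ dist x (φ^[m] x) / m := by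
    filter_upwards [Filter.eventually_ge_atTop 1] with k hk
    have hkm : (0:ℝ) < (k:ℝ) * m := by
      have : (1:ℝ) ≤ (k:ℝ) := by exact_mod_cast hk
      have : (1:ℝ) ≤ (m:ℝ) := by exact_mod_cast hm
      nlinarith [this]
    push_cast
    rw [div_le_div_iff₀ hkm (by positivity)]
    have := hmul k
    nlinarith [dist_nonneg (x := x) (y := φ^[m] x), this]
  have ht' : t ≤ dist x (φ^[m] x) / m := le_of_tendsto hcomp hle
  rw [le_div_iff₀ (by positivity : (0:ℝ) < (m:ℝ))] at ht'
  linarith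
lemma orbit_gp {δ' : ℝ} (hδ' : 0 ≤ δ')
    (h4 : ∀ w x y z : X, min (gp w x y) (gp w y z) ≤ gp w x z + δ')
    {F : X → X} (hF : Isometry F) (x₀ : X) {t : ℝ} (ht : 0 < t)
    (hst : Tendsto (fun n : ℕ => dist x₀ (F^[n] x₀) / n) atTop (nhds t)) :
    ∀ R : ℝ, ∃ N : ℕ, 1 ≤ N ∧ ∀ n m : ℕ, N ≤ n → n ≤ m →
      R ≤ gp x₀ (F^[n] x₀) (F^[m] x₀) := by
  intro R
  set a : ℕ → ℝ := fun n => dist x₀ (F^[n] x₀) with ha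
  -- choose k with a (2k) ≥ a k + 4δ' + 1
  have hev1 : ∀ᶠ k : ℕ in atTop, a k / k < 3 * t / 2 :=
    hst.eventually_lt_const (by linarith)
  obtain ⟨k, hk1, hk2, hk3⟩ : ∃ k : ℕ, 1 ≤ k ∧ a k / k < 3 * t / 2 ∧
      (4 * δ' + 2) / (t / 2) ≤ (k : ℝ) := by
    obtain ⟨B, hB⟩ := exists_nat_ge ((4 * δ' + 2) / (t / 2))
    obtain ⟨k, hk⟩ := (hev1.and (Filter.eventually_ge_atTop (max 1 B))).exists
    exact ⟨k, le_trans (le_max_left _ _) hk.2, hk.1,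
      le_trans hB (by exact_mod_cast le_trans (le_max_right 1 B) hk.2)⟩
  have hkR : (0:ℝ) < (k:ℝ) := by exact_mod_cast hk1
  have hak : a k < 3 * t / 2 * k := by
    rw [div_lt_iff₀ hkR] at hk2; linarith
  have ha2k : 2 * k * t ≤ a (2*k) := by
    have := fekete hF x₀ hst (2*k) (by omega)
    push_cast at this ⊢
    linarith
  have hgap : a k + 4 * δ' + 1 ≤ a (2*k) := by
    have h1 : (4 * δ' + 2) ≤ t / 2 * k := by
      rw [div_le_iff₀ (by linarith : (0:ℝ) < t/2)] at hk3
      linarith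
    nlinarith
  -- apply the chain lemma to φ := F^[k]
  set φ : X → X := F^[k] with hφs
  have hφI : Isometry φ := isom_iter hF k
  have hφ1 : φ x₀ = F^[k] x₀ := rfl
  have hφ2 : φ (φ x₀) = F^[2*k] x₀ := by
    rw [hφs, ← Function.iterate_add_apply]
    congr 1; omega
  have hφn : ∀ n : ℕ, φ^[n] x₀ = F^[k*n] x₀ := by
    intro n; rw [hφs, Function.iterate_mul]
  have hPval : gp (φ x₀) x₀ (φ (φ x₀)) = (a k + a k - a (2*k)) / 2 := by
    have h1 : dist (φ x₀) x₀ = a k := by rw [hφ1, dist_comm]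
    have h2 : dist (φ x₀) (φ (φ x₀)) = a k := by
      rw [hφI.dist_eq x₀ (φ x₀), hφ1]
    have h3 : dist x₀ (φ (φ x₀)) = a (2*k) := by rw [hφ2]
    simp only [gp]
    rw [h1, h2, h3]
  have hLc : 2 * gp (φ x₀) x₀ (φ (φ x₀)) + 4 * δ' + 1 ≤ dist x₀ (φ x₀) := by
    rw [hPval, hφ1]
    have : dist x₀ (F^[k] x₀) = a k := rfl
    rw [this]
    linarith
  obtain ⟨hcA, hcB⟩ := chain hδ' h4 φ hφI x₀ hLc
  set P₀ : ℝ := gp (φ x₀) x₀ (φ (φ x₀)) with hP₀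
  have hP₀0 : 0 ≤ P₀ := gp_nonneg _ _ _
  have hc1 : 1 ≤ dist x₀ (φ x₀) - 2 * P₀ - 2 * δ' := by linarith [hLc]
  -- gp between multiples of k
  have hmult : ∀ i j : ℕ, 1 ≤ i → i ≤ j →
      (i : ℝ) - P₀ - 2 * δ' ≤ gp x₀ (F^[k*i] x₀) (F^[k*j] x₀) := by
    intro i j hi hij
    have hB := hcB i j hi hij
    have hA := hcA i hi
    rw [hφn i, hφn j] at hB
    have : (i:ℝ) ≤ dist x₀ (φ^[i] x₀) := by
      calc (i:ℝ) = (i:ℝ) * 1 := by ring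
        _ ≤ (i:ℝ) * (dist x₀ (φ x₀) - 2 * P₀ - 2 * δ') := by
            apply mul_le_mul_of_nonneg_left hc1 (by positivity)
        _ ≤ dist x₀ (φ^[i] x₀) := hA
    rw [hφn i] at this
    linarith
  -- remainder bound
  have hrem : ∀ n : ℕ, dist (F^[k*(n/k)] x₀) (F^[n] x₀) ≤ k * dist x₀ (F x₀) := by
    intro n
    have key : dist (F^[k*(n/k)] x₀) (F^[n] x₀) = dist x₀ (F^[n % k] x₀) := by
      conv_lhs => rw [show F^[n] x₀ = F^[k*(n/k)] (F^[n % k] x₀) by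
        rw [← Function.iterate_add_apply, Nat.div_add_mod]]
      exact (isom_iter hF _).dist_eq _ _
    rw [key]
    calc dist x₀ (F^[n % k] x₀) ≤ ((n % k : ℕ) : ℝ) * dist x₀ (F x₀) := dist_iter_le hF x₀ _
      _ ≤ (k:ℝ) * dist x₀ (F x₀) := by
          apply mul_le_mul_of_nonneg_right _ dist_nonneg
          exact_mod_cast (Nat.mod_lt n (by omega : 0 < k)).le
  -- choose N
  obtain ⟨B, hB⟩ := exists_nat_ge (R + P₀ + 2 * δ' + 2 * k * dist x₀ (F x₀))
  refine ⟨k * (B + 1), Nat.mul_pos (by omega) (Nat.succ_pos B), ?_⟩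
  intro n m hn hnm
  have hq1 : B + 1 ≤ n / k := by
    have := Nat.div_le_div_right (c := k) hn
    rwa [Nat.mul_div_cancel_left _ (by omega : 0 < k)] at this
  have hqq : n / k ≤ m / k := Nat.div_le_div_right hnm
  have hmain := hmult (n/k) (m/k) (by omega) hqq
  have hl1 : gp x₀ (F^[k*(n/k)] x₀) (F^[k*(m/k)] x₀)
      ≤ gp x₀ (F^[n] x₀) (F^[k*(m/k)] x₀) + dist (F^[k*(n/k)] x₀) (F^[n] x₀) := by
    have := gp_lip_arg x₀ (F^[k*(m/k)] x₀) (F^[k*(n/k)] x₀) (F^[n] x₀)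
    rw [gp_symm x₀ (F^[k*(m/k)] x₀) (F^[k*(n/k)] x₀),
        gp_symm x₀ (F^[k*(m/k)] x₀) (F^[n] x₀)] at this
    linarith
  have hl2 : gp x₀ (F^[n] x₀) (F^[k*(m/k)] x₀)
      ≤ gp x₀ (F^[n] x₀) (F^[m] x₀) + dist (F^[k*(m/k)] x₀) (F^[m] x₀) :=
    gp_lip_arg x₀ (F^[n] x₀) (F^[k*(m/k)] x₀) (F^[m] x₀)
  have hr1 := hrem n
  have hr2 := hrem m
  have hnk : (B:ℝ) + 1 ≤ ((n/k : ℕ) : ℝ) := by exact_mod_cast hq1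
  linarith
end S12

open S12 in
theorem stmt12 {X : Type*} [MetricSpace X] (δ : ℝ) (hδ : 0 ≤ δ)
    (hgeo : GeodSpace X) (hhyp : DeltaHyp X δ)
    (f g : X ≃ᵢ X) (t : ℝ) (ht : 0 < t)
    (hstable : ∀ x : X,
      Filter.Tendsto (fun n : ℕ => dist x ((⇑f)^[n] x) / n) Filter.atTop (nhds t))
    (x₀ : X)
    (hne : ¬ Filter.Tendsto (fun n : ℕ =>
        (dist (g ((⇑f)^[n] x₀)) x₀ + dist ((⇑f.symm)^[n] x₀) x₀
          - dist (g ((⇑f)^[n] x₀)) ((⇑f.symm)^[n] x₀)) / 2)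
      Filter.atTop Filter.atTop) :
    ∃ M : ℕ, ∀ m ≥ M, ∀ x' : X,
      0 < Filter.liminf
        (fun n : ℕ => dist x' ((fun y => (⇑f)^[m] (g y))^[n] x') / n) Filter.atTop := by
  classical
  set δ' : ℝ := 3 * δ with hδ's
  have hδ'0 : 0 ≤ δ' := by positivity
  have h4 : ∀ w x y z : X, min (gp w x y) (gp w y z) ≤ gp w x z + δ' :=
    fun w x y z => four_point hδ hgeo hhyp w x y z
  have hfI : Isometry ⇑f := f.isometry
  have hgI : Isometry ⇑g := g.isometry
  have hfsI : Isometry ⇑f.symm := f.symm.isometry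
  have hgsI : Isometry ⇑g.symm := g.symm.isometry
  set C₁ : ℝ := dist x₀ (g.symm x₀) with hC₁
  set C₂ : ℝ := dist x₀ (g x₀) with hC₂
  have hC₁0 : 0 ≤ C₁ := dist_nonneg
  have hC₂0 : 0 ≤ C₂ := dist_nonneg
  have hstf := hstable x₀
  -- stable length for f.symm
  have hfsd : ∀ n : ℕ, dist x₀ ((⇑f.symm)^[n] x₀) = dist x₀ ((⇑f)^[n] x₀) := by
    intro n
    have hli : Function.LeftInverse ⇑f ⇑f.symm := f.apply_symm_apply
    have hit : (⇑f)^[n] ((⇑f.symm)^[n] x₀) = x₀ := (hli.iterate n) x₀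
    calc dist x₀ ((⇑f.symm)^[n] x₀)
        = dist ((⇑f)^[n] x₀) ((⇑f)^[n] ((⇑f.symm)^[n] x₀)) :=
          ((isom_iter hfI n).dist_eq _ _).symm
      _ = dist ((⇑f)^[n] x₀) x₀ := by rw [hit]
      _ = dist x₀ ((⇑f)^[n] x₀) := dist_comm _ _
  have hstfs : Filter.Tendsto (fun n : ℕ => dist x₀ ((⇑f.symm)^[n] x₀) / n)
      Filter.atTop (nhds t) := by
    apply hstf.congr
    intro n
    rw [hfsd n]
  -- extract a frequent bound from hne
  obtain ⟨K, hK⟩ : ∃ K : ℝ, ∀ N : ℕ, ∃ n, N ≤ n ∧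
      gp x₀ (g ((⇑f)^[n] x₀)) ((⇑f.symm)^[n] x₀) < K := by
    rw [Filter.tendsto_atTop] at hne
    push_neg at hne
    obtain ⟨K, hK⟩ := hne
    refine ⟨K, fun N => ?_⟩
    obtain ⟨n, hn1, hn2⟩ := (Filter.frequently_atTop.1 hK) N
    refine ⟨n, hn1, ?_⟩
    have heq : (dist (g ((⇑f)^[n] x₀)) x₀ + dist ((⇑f.symm)^[n] x₀) x₀
        - dist (g ((⇑f)^[n] x₀)) ((⇑f.symm)^[n] x₀)) / 2
        = gp x₀ (g ((⇑f)^[n] x₀)) ((⇑f.symm)^[n] x₀) := by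
      simp only [gp]
      rw [dist_comm x₀ (g ((⇑f)^[n] x₀)), dist_comm x₀ ((⇑f.symm)^[n] x₀)]
    rw [← heq]
    exact hn2
  -- translate to the Gromov product we need
  have hQR : ∀ n : ℕ, gp x₀ ((⇑f)^[n] x₀) (g.symm ((⇑f.symm)^[n] x₀))
      ≤ gp x₀ (g ((⇑f)^[n] x₀)) ((⇑f.symm)^[n] x₀) + C₁ := by
    intro n
    have h1 : gp (g.symm x₀) (g.symm (g ((⇑f)^[n] x₀))) (g.symm ((⇑f.symm)^[n] x₀))
        = gp x₀ (g ((⇑f)^[n] x₀)) ((⇑f.symm)^[n] x₀) := gp_isom hgsI _ _ _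
    rw [g.symm_apply_apply] at h1
    have h2 := gp_lip_base x₀ (g.symm x₀) ((⇑f)^[n] x₀) (g.symm ((⇑f.symm)^[n] x₀))
    rw [h1] at h2
    exact h2
  set Kq : ℝ := K + C₁ with hKq
  set K₁ : ℝ := Kq + δ' with hK₁
  set K₂' : ℝ := K₁ + δ' with hK₂'
  set K₂ : ℝ := K₂' + C₂ with hK₂
  obtain ⟨N₁, hN₁1, hN₁⟩ := orbit_gp hδ'0 h4 hfI x₀ ht hstf (Kq + δ' + 1)
  obtain ⟨N₂, hN₂1, hN₂⟩ := orbit_gp hδ'0 h4 hfsI x₀ ht hstfs (K₁ + δ' + 1 + C₁)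
  obtain ⟨n₀, hn₀N, hn₀Q⟩ := hK (max N₁ N₂)
  have hn₀N₁ : N₁ ≤ n₀ := le_trans (le_max_left _ _) hn₀N
  have hn₀N₂ : N₂ ≤ n₀ := le_trans (le_max_right _ _) hn₀N
  have hRn₀ : gp x₀ ((⇑f)^[n₀] x₀) (g.symm ((⇑f.symm)^[n₀] x₀)) ≤ Kq := by
    have := hQR n₀
    linarith [hn₀Q]
  -- key uniform bound on the Gromov product
  have hKey : ∀ m : ℕ, n₀ ≤ m →
      gp x₀ (g.symm ((⇑f.symm)^[m] x₀)) ((⇑f)^[m] (g x₀)) ≤ K₂ := by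
    intro m hm
    -- Step 1
    have hT1 : gp x₀ ((⇑f)^[m] x₀) (g.symm ((⇑f.symm)^[n₀] x₀)) ≤ K₁ := by
      have h := h4 x₀ ((⇑f)^[n₀] x₀) ((⇑f)^[m] x₀) (g.symm ((⇑f.symm)^[n₀] x₀))
      have hbig := hN₁ n₀ m hn₀N₁ hm
      rcases le_or_gt (gp x₀ ((⇑f)^[n₀] x₀) ((⇑f)^[m] x₀))
          (gp x₀ ((⇑f)^[m] x₀) (g.symm ((⇑f.symm)^[n₀] x₀))) with hmin | hmin
      · rw [min_eq_left hmin] at h; linarith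
      · rw [min_eq_right hmin.le] at h; linarith
    -- Step 2
    have hT2 : gp x₀ (g.symm ((⇑f.symm)^[m] x₀)) ((⇑f)^[m] x₀) ≤ K₂' := by
      have h := h4 x₀ (g.symm ((⇑f.symm)^[n₀] x₀)) (g.symm ((⇑f.symm)^[m] x₀)) ((⇑f)^[m] x₀)
      have hac : gp x₀ (g.symm ((⇑f.symm)^[n₀] x₀)) ((⇑f)^[m] x₀) ≤ K₁ := by
        rw [gp_symm]; exact hT1
      have hbig : K₁ + δ' + 1
          ≤ gp x₀ (g.symm ((⇑f.symm)^[n₀] x₀)) (g.symm ((⇑f.symm)^[m] x₀)) := by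
        have hiso : gp (g.symm x₀) (g.symm ((⇑f.symm)^[n₀] x₀)) (g.symm ((⇑f.symm)^[m] x₀))
            = gp x₀ ((⇑f.symm)^[n₀] x₀) ((⇑f.symm)^[m] x₀) := gp_isom hgsI _ _ _
        have hlip := gp_lip_base (g.symm x₀) x₀
          (g.symm ((⇑f.symm)^[n₀] x₀)) (g.symm ((⇑f.symm)^[m] x₀))
        rw [hiso] at hlip
        have horb := hN₂ n₀ m hn₀N₂ hm
        have hdc : dist (g.symm x₀) x₀ = C₁ := dist_comm _ _
        rw [hdc] at hlip
        linarith
      rcases le_or_gt (gp x₀ (g.symm ((⇑f.symm)^[n₀] x₀)) (g.symm ((⇑f.symm)^[m] x₀)))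
          (gp x₀ (g.symm ((⇑f.symm)^[m] x₀)) ((⇑f)^[m] x₀)) with hmin | hmin
      · rw [min_eq_left hmin] at h; linarith
      · rw [min_eq_right hmin.le] at h; linarith
    -- Step 3
    have hlip := gp_lip_arg x₀ (g.symm ((⇑f.symm)^[m] x₀)) ((⇑f)^[m] (g x₀)) ((⇑f)^[m] x₀)
    have hdc : dist ((⇑f)^[m] (g x₀)) ((⇑f)^[m] x₀) = C₂ := by
      rw [(isom_iter hfI m).dist_eq, dist_comm]
    rw [hdc] at hlip
    linarith
  -- growth of dist x₀ (f^[m] x₀)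
  have hamt : ∀ m : ℕ, 1 ≤ m → (m : ℝ) * t ≤ dist x₀ ((⇑f)^[m] x₀) :=
    fun m hm => fekete hfI x₀ hstf m hm
  obtain ⟨B₂, hB₂⟩ := exists_nat_ge ((C₂ + 2 * K₂ + 4 * δ' + 1) / t)
  refine ⟨max n₀ (max B₂ 1), ?_⟩
  intro m hm x'
  have hmn₀ : n₀ ≤ m := le_trans (le_max_left _ _) hm
  have hmB₂ : B₂ ≤ m := le_trans (le_trans (le_max_left _ _) (le_max_right n₀ _)) hm
  have hm1 : 1 ≤ m := le_trans (le_trans (le_max_right _ _) (le_max_right n₀ _)) hm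
  set φ : X → X := fun y => (⇑f)^[m] (g y) with hφs
  have hφI : Isometry φ := (isom_iter hfI m).comp hgI
  set ψ : X → X := fun y => g.symm ((⇑f.symm)^[m] y) with hψs
  have hψI : Isometry ψ := hgsI.comp (isom_iter hfsI m)
  have hinv : ∀ y : X, ψ (φ y) = y := by
    intro y
    have hli2 : Function.LeftInverse ⇑f.symm ⇑f := f.symm_apply_apply
    have : (⇑f.symm)^[m] ((⇑f)^[m] (g y)) = g y := (hli2.iterate m) (g y)
    simp only [hψs, hφs, this, g.symm_apply_apply]
  -- Gromov product bound for φ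
  have hPb : gp (φ x₀) x₀ (φ (φ x₀)) ≤ K₂ := by
    have hiso := gp_isom hψI (φ x₀) x₀ (φ (φ x₀))
    rw [hinv x₀, hinv (φ x₀)] at hiso
    rw [← hiso]
    exact hKey m hmn₀
  -- length bound for φ
  have hLb : 2 * gp (φ x₀) x₀ (φ (φ x₀)) + 4 * δ' + 1 ≤ dist x₀ (φ x₀) := by
    have htri : dist x₀ ((⇑f)^[m] x₀)
        ≤ dist x₀ (φ x₀) + dist (φ x₀) ((⇑f)^[m] x₀) := dist_triangle _ _ _
    have hdc : dist (φ x₀) ((⇑f)^[m] x₀) = C₂ := by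
      show dist ((⇑f)^[m] (g x₀)) ((⇑f)^[m] x₀) = C₂
      rw [(isom_iter hfI m).dist_eq, dist_comm]
    rw [hdc] at htri
    have hmt := hamt m hm1
    have hBt : C₂ + 2 * K₂ + 4 * δ' + 1 ≤ (m : ℝ) * t := by
      rw [div_le_iff₀ ht] at hB₂
      have : (B₂ : ℝ) ≤ (m : ℝ) := by exact_mod_cast hmB₂
      nlinarith
    linarith
  obtain ⟨hcA, _⟩ := chain hδ'0 h4 φ hφI x₀ hLb
  have hP0 : 0 ≤ gp (φ x₀) x₀ (φ (φ x₀)) := gp_nonneg _ _ _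
  have hgrow : ∀ n : ℕ, 1 ≤ n → (n : ℝ) ≤ dist x₀ (φ^[n] x₀) := by
    intro n hn
    have h := hcA n hn
    have h1 : (1 : ℝ) ≤ dist x₀ (φ x₀) - 2 * gp (φ x₀) x₀ (φ (φ x₀)) - 2 * δ' := by
      linarith
    calc (n : ℝ) = (n : ℝ) * 1 := by ring
      _ ≤ (n : ℝ) * (dist x₀ (φ x₀) - 2 * gp (φ x₀) x₀ (φ (φ x₀)) - 2 * δ') := by
          apply mul_le_mul_of_nonneg_left h1 (by positivity)
      _ ≤ dist x₀ (φ^[n] x₀) := h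
  set D : ℝ := dist x' x₀ with hD
  have hD0 : 0 ≤ D := dist_nonneg
  have hlow : ∀ n : ℕ, 1 ≤ n → (n : ℝ) - 2 * D ≤ dist x' (φ^[n] x') := by
    intro n hn
    have h1 : dist x₀ (φ^[n] x₀) ≤ dist x₀ x' + dist x' (φ^[n] x') + dist (φ^[n] x') (φ^[n] x₀) :=
      dist_triangle4 _ _ _ _
    have h2 : dist (φ^[n] x') (φ^[n] x₀) = D := (isom_iter hφI n).dist_eq _ _
    have h3 : dist x₀ x' = D := dist_comm _ _
    rw [h2, h3] at h1
    linarith [hgrow n hn]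
  obtain ⟨N₃, hN₃⟩ := exists_nat_ge (4 * D)
  have hev : ∀ᶠ n : ℕ in Filter.atTop, (1:ℝ)/2 ≤ dist x' (φ^[n] x') / n := by
    filter_upwards [Filter.eventually_ge_atTop (max N₃ 1)] with n hn
    have hn1 : 1 ≤ n := le_trans (le_max_right _ _) hn
    have hnN₃ : N₃ ≤ n := le_trans (le_max_left _ _) hn
    have hnR : (4 * D : ℝ) ≤ n := le_trans hN₃ (by exact_mod_cast hnN₃)
    have hnpos : (0:ℝ) < n := by exact_mod_cast hn1
    rw [le_div_iff₀ hnpos]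
    have := hlow n hn1
    linarith
  have hbdd : Filter.IsBoundedUnder (· ≤ ·) Filter.atTop
      (fun n : ℕ => dist x' (φ^[n] x') / n) := by
    refine ⟨dist x' (φ x'), ?_⟩
    rw [Filter.eventually_map]
    filter_upwards [Filter.eventually_ge_atTop 1] with n hn
    have hnpos : (0:ℝ) < n := by exact_mod_cast hn
    rw [div_le_iff₀ hnpos]
    calc dist x' (φ^[n] x') ≤ (n:ℝ) * dist x' (φ x') := dist_iter_le hφI x' n
      _ = dist x' (φ x') * n := by ring
  have hlim := Filter.le_liminf_of_le hbdd.isCoboundedUnder_ge hev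
  calc (0:ℝ) < 1/2 := by norm_num
    _ ≤ _ := hlim

end
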